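/- Let X be a real Banach space. For ε ∈ [0, 1/2] the inequalities λ⁻_X(ε/2) ≤ φ⁻_X(ε) ≤ λ⁻_X(2ε) and λ⁺_X(ε/2) ≤ φ⁺_X(ε) ≤ λ⁺_X(2ε) hold. -/

import Mathlib

noncomputable def lam {X : Type*} [NormedAddCommGroup X] [NormedSpace ℝ X]
    (x y : X) (ε : ℝ) : ℝ :=
  sInf {l : ℝ | ‖x + ε • y - l • x‖ = 1}

section Helpers
variable {X : Type*} [NormedAddCommGroup X] [NormedSpace ℝ X]

lemma normphi_cont (x y : X) (δ : ℝ) : Continuous fun l : ℝ => ‖x + δ • y - l • x‖ := by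
  fun_prop

lemma sols_nonneg {x y : X} (hx : ‖x‖ = 1) (ho : ∀ t : ℝ, ‖x‖ ≤ ‖x + t • y‖)
    {δ l : ℝ} (hl : ‖x + δ • y - l • x‖ = 1) : 0 ≤ l := by
  by_contra hneg
  push_neg at hneg
  have h1 : (0:ℝ) < 1 - l := by linarith
  have key : x + δ • y - l • x = (1 - l) • (x + ((1-l)⁻¹ * δ) • y) := by
    match_scalars
    · ring
    · field_simp
  rw [key, norm_smul, Real.norm_eq_abs, abs_of_pos h1] at hl
  have h2 := ho ((1-l)⁻¹ * δ)
  rw [hx] at h2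
  nlinarith

lemma exists_sol_le {x y : X} (hx : ‖x‖ = 1) (hy : ‖y‖ = 1)
    (ho : ∀ t : ℝ, ‖x‖ ≤ ‖x + t • y‖) {δ c : ℝ} (hc0 : 0 ≤ c)
    (hle : ‖x + δ • y - c • x‖ ≤ 1) :
    ∃ l, 0 ≤ l ∧ l ≤ c ∧ ‖x + δ • y - l • x‖ = 1 := by
  have h0 : 1 ≤ ‖x + δ • y - (0:ℝ) • x‖ := by
    have := ho δ; rw [hx] at this; simpa using this
  have := intermediate_value_Icc' hc0 ((normphi_cont x y δ).continuousOn)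
  have h1 : (1:ℝ) ∈ Set.Icc (‖x + δ • y - c • x‖) (‖x + δ • y - (0:ℝ) • x‖) := ⟨hle, h0⟩
  obtain ⟨l, hl, hl1⟩ := this h1
  exact ⟨l, hl.1, hl.2, hl1⟩

lemma triangle_sol {x y : X} (hx : ‖x‖ = 1) (hy : ‖y‖ = 1) {δ : ℝ} (hδ0 : 0 ≤ δ) (hδ1 : δ ≤ 1) :
    ‖x + δ • y - δ • x‖ ≤ 1 := by
  have : x + δ • y - δ • x = (1-δ) • x + δ • y := by module
  rw [this]
  calc ‖(1-δ) • x + δ • y‖ ≤ ‖(1-δ) • x‖ + ‖δ • y‖ := norm_add_le _ _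
    _ = |1-δ| * 1 + |δ| * 1 := by rw [norm_smul, norm_smul, hx, hy]; simp [Real.norm_eq_abs]
    _ = 1 := by rw [abs_of_nonneg (by linarith), abs_of_nonneg hδ0]; ring

lemma lam_nonneg {x y : X} (hx : ‖x‖ = 1) (ho : ∀ t : ℝ, ‖x‖ ≤ ‖x + t • y‖) (δ : ℝ) :
    0 ≤ lam x y δ :=
  Real.sInf_nonneg fun _ hl => sols_nonneg hx ho hl

lemma lam_le_of_le {x y : X} (hx : ‖x‖ = 1) (hy : ‖y‖ = 1)
    (ho : ∀ t : ℝ, ‖x‖ ≤ ‖x + t • y‖) {δ c : ℝ} (hc0 : 0 ≤ c)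
    (hle : ‖x + δ • y - c • x‖ ≤ 1) : lam x y δ ≤ c := by
  obtain ⟨l, _, hlc, hl⟩ := exists_sol_le hx hy ho hc0 hle
  exact le_trans (csInf_le ⟨0, fun _ h => sols_nonneg hx ho h⟩ hl) hlc

lemma lam_le {x y : X} (hx : ‖x‖ = 1) (hy : ‖y‖ = 1)
    (ho : ∀ t : ℝ, ‖x‖ ≤ ‖x + t • y‖) {δ : ℝ} (hδ0 : 0 ≤ δ) (hδ1 : δ ≤ 1) :
    lam x y δ ≤ δ :=
  lam_le_of_le hx hy ho hδ0 (triangle_sol hx hy hδ0 hδ1)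

lemma lam_mem {x y : X} (hx : ‖x‖ = 1) (hy : ‖y‖ = 1)
    (ho : ∀ t : ℝ, ‖x‖ ≤ ‖x + t • y‖) {δ : ℝ} (hδ0 : 0 ≤ δ) (hδ1 : δ ≤ 1) :
    ‖x + δ • y - (lam x y δ) • x‖ = 1 := by
  have hclosed : IsClosed {l : ℝ | ‖x + δ • y - l • x‖ = 1} :=
    isClosed_eq (normphi_cont x y δ) continuous_const
  obtain ⟨l, hl0, hlδ, hl⟩ := exists_sol_le hx hy ho hδ0 (triangle_sol hx hy hδ0 hδ1)
  exact hclosed.csInf_mem ⟨l, hl⟩ ⟨0, fun _ h => sols_nonneg hx ho h⟩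

lemma le_lam {x y : X} (hx : ‖x‖ = 1) (hy : ‖y‖ = 1)
    (ho : ∀ t : ℝ, ‖x‖ ≤ ‖x + t • y‖) {δ c : ℝ} (hδ0 : 0 ≤ δ) (hδ1 : δ ≤ 1)
    (h : ∀ l, ‖x + δ • y - l • x‖ = 1 → c ≤ l) : c ≤ lam x y δ := by
  obtain ⟨l, _, _, hl⟩ := exists_sol_le hx hy ho hδ0 (triangle_sol hx hy hδ0 hδ1)
  exact le_csInf ⟨l, hl⟩ fun b hb => h b hb

lemma not_parallel {x y : X} (hx : ‖x‖ = 1) (hy : ‖y‖ = 1)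
    (ho : ∀ t : ℝ, ‖x‖ ≤ ‖x + t • y‖) (c : ℝ) : y ≠ c • x := by
  intro h
  have hc : c ≠ 0 := by
    intro h0; rw [h0, zero_smul] at h; rw [h, norm_zero] at hy; norm_num at hy
  have := ho (-c⁻¹)
  rw [hx, h, smul_smul] at this
  have : ‖x + (-c⁻¹ * c) • x‖ = 0 := by
    rw [show -c⁻¹ * c = -1 by field_simp]
    simp
  nlinarith [ho (-c⁻¹), hx, this, (by rw [h, smul_smul] : x + (-c⁻¹) • y = x + (-c⁻¹ * c) • x)]

end Helpers

section L2
variable {X : Type*} [NormedAddCommGroup X] [NormedSpace ℝ X]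

lemma exists_support_functional {x y : X} (hx : ‖x‖ = 1)
    (ho : ∀ t : ℝ, ‖x‖ ≤ ‖x + t • y‖) :
    ∃ p : X →L[ℝ] ℝ, ‖p‖ = 1 ∧ p x = 1 ∧ p y = 0 := by
  set L : Set X := {v | ∃ t : ℝ, v = x + t • y} with hLdef
  have hL : Convex ℝ L := by
    rintro a ⟨s, rfl⟩ b ⟨t, rfl⟩ α β hα hβ hαβ
    refine ⟨α * s + β * t, ?_⟩
    match_scalars <;> simp <;> linarith
  have hdisj : Disjoint (Metric.ball (0:X) 1) L := by
    rw [Set.disjoint_left]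
    rintro v hv ⟨t, rfl⟩
    rw [Metric.mem_ball, dist_zero_right] at hv
    have := ho t; rw [hx] at this; linarith
  obtain ⟨f, u, hfu1, hfu2⟩ :=
    geometric_hahn_banach_open (convex_ball 0 1) Metric.isOpen_ball hL hdisj
  have hu0 : 0 < u := by
    have := hfu1 0 (by simp)
    simpa using this
  have hfx : u ≤ f x := hfu2 x ⟨0, by simp⟩
  have hfy : f y = 0 := by
    by_contra h
    have := hfu2 (x + ((u - 1 - f x)/(f y)) • y) ⟨_, rfl⟩
    rw [map_add, map_smul] at this
    simp only [smul_eq_mul] at this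
    rw [div_mul_cancel₀ _ h] at this
    linarith
  -- claim: no v with f v > u * ‖v‖
  have claim : ∀ v : X, ¬ (u * ‖v‖ < f v) := by
    intro v hv
    have hfv : 0 < f v := lt_of_le_of_lt (by positivity) hv
    have hv0 : v ≠ 0 := by rintro rfl; simp at hv
    have hnv : 0 < ‖v‖ := norm_pos_iff.mpr hv0
    set β := u * ‖v‖ / f v with hβ
    have hβ1 : β < 1 := by rw [hβ, div_lt_one hfv]; exact hv
    have hβ0 : 0 ≤ β := by positivity
    set c := (β + 1) / (2 * ‖v‖) with hc
    have hc0 : 0 < c := by positivity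
    have hball : c • v ∈ Metric.ball (0:X) 1 := by
      rw [Metric.mem_ball, dist_zero_right, norm_smul, Real.norm_eq_abs, abs_of_pos hc0]
      rw [hc]; rw [div_mul_eq_mul_div]
      rw [div_lt_one (by positivity)]
      nlinarith
    have h1 := hfu1 _ hball
    rw [map_smul, smul_eq_mul] at h1
    -- c * f v < u = β * f v / ‖v‖
    have hu : u = β * f v / ‖v‖ := by rw [hβ]; field_simp
    rw [hu, hc] at h1
    rw [div_mul_eq_mul_div, div_lt_div_iff₀ (by positivity) hnv] at h1
    nlinarith [mul_pos hfv hnv, hβ1]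
  have hnorm : ‖f‖ ≤ u := by
    apply ContinuousLinearMap.opNorm_le_bound _ hu0.le
    intro w
    rw [Real.norm_eq_abs, abs_le]
    constructor
    · have := claim (-w); push_neg at this; simp at this; linarith
    · have := claim w; push_neg at this; linarith
  have hfxu : f x = u := le_antisymm (by
    calc f x ≤ |f x| := le_abs_self _
      _ ≤ ‖f‖ * ‖x‖ := f.le_opNorm x
      _ ≤ u := by rw [hx]; simpa using hnorm) hfx
  refine ⟨u⁻¹ • f, ?_, ?_, ?_⟩
  · rw [norm_smul u⁻¹ f, Real.norm_eq_abs, abs_of_pos (by positivity : (0:ℝ) < u⁻¹)]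
    have hfn : ‖f‖ = u := le_antisymm hnorm (by
      calc u = f x := hfxu.symm
        _ ≤ |f x| := le_abs_self _
        _ ≤ ‖f‖ * ‖x‖ := f.le_opNorm x
        _ = ‖f‖ := by rw [hx, mul_one])
    rw [hfn]; field_simp
  · simp only [ContinuousLinearMap.smul_apply, smul_eq_mul, hfxu]
    exact inv_mul_cancel₀ hu0.ne'
  · simp [hfy]
end L2

section Blocks
variable {X : Type*} [NormedAddCommGroup X] [NormedSpace ℝ X]

lemma ortho_of_functional {x y : X} (hx : ‖x‖ = 1) {p : X →L[ℝ] ℝ} (hp : ‖p‖ = 1)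
    (hpx : p x = 1) (hpy : p y = 0) : ∀ t : ℝ, ‖x‖ ≤ ‖x + t • y‖ := by
  intro t
  have h1 : p (x + t • y) = 1 := by rw [map_add, map_smul, hpx, hpy]; simp
  have h2 : |p (x + t • y)| ≤ ‖x + t • y‖ := by
    calc |p (x + t • y)| ≤ ‖p‖ * ‖x + t • y‖ := p.le_opNorm _
      _ = ‖x + t • y‖ := by rw [hp, one_mul]
  rw [h1] at h2; rw [hx]; simpa using h2

lemma pair_of_phi {ε : ℝ} (hε0 : 0 < ε) (hε1 : ε ≤ 1/2) {x z : X} {p : X →L[ℝ] ℝ}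
    (hx : ‖x‖ = 1) (hz : ‖z‖ = 1) (hxz : ‖x - z‖ = ε) (hp : ‖p‖ = 1) (hpx : p x = 1) :
    ∃ y : X, ‖y‖ = 1 ∧ (∀ t : ℝ, ‖x‖ ≤ ‖x + t • y‖) ∧
      lam x y (ε/2) ≤ p (x - z) ∧ p (x - z) ≤ lam x y (2*ε) := by
  set r := p (x - z) with hr
  have hr1 : r = 1 - p z := by rw [hr, map_sub, hpx]
  have hr0 : 0 ≤ r := by
    have : |p z| ≤ ‖z‖ := by calc |p z| ≤ ‖p‖ * ‖z‖ := p.le_opNorm _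
                                _ = ‖z‖ := by rw [hp, one_mul]
    rw [hz] at this; rw [hr1]; cases abs_le.mp this; linarith
  have hrε : r ≤ ε := by
    have : |p (x - z)| ≤ ‖p‖ * ‖x - z‖ := p.le_opNorm _
    rw [hp, hxz, one_mul] at this
    exact le_trans (le_abs_self _) this
  set u := z - (1 - r) • x with hu
  have hpu : p u = 0 := by
    rw [hu, map_sub, map_smul, hpx, smul_eq_mul, mul_one]; linarith
  have hum : ‖u‖ ≤ ε + r := by
    have : u = (z - x) + r • x := by rw [hu]; module
    rw [this]
    calc ‖(z - x) + r • x‖ ≤ ‖z - x‖ + ‖r • x‖ := norm_add_le _ _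
      _ = ε + r := by rw [norm_sub_rev, hxz, norm_smul, hx, Real.norm_eq_abs, abs_of_nonneg hr0, mul_one]
  have hlm : ε - r ≤ ‖u‖ := by
    have h1 : u = (z - x) + r • x := by rw [hu]; module
    have := norm_sub_norm_le (z - x) (-(r • x))
    have h2 : ‖(z-x) - -(r • x)‖ = ‖u‖ := by rw [h1]; congr 1; module
    rw [h2, norm_neg, norm_sub_rev, hxz, norm_smul, hx, Real.norm_eq_abs, abs_of_nonneg hr0, mul_one] at this
    linarith
  have hu0 : u ≠ 0 := by
    intro h
    rw [h, norm_zero] at hlm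
    have hzx : z = (1 - r) • x := by rw [hu] at h; linear_combination (norm := module) h
    rw [hzx, norm_smul, hx, mul_one, Real.norm_eq_abs] at hz
    have : 1 - r ≥ 1 - ε := by linarith
    rw [abs_of_pos (by linarith)] at hz
    -- 1 - r = 1 ⇒ r = 0, but r ≥ ε > 0
    have : r = 0 := by linarith
    -- then z = x, so ε = ‖x - z‖ = 0
    rw [this] at hzx; simp at hzx
    rw [hzx, sub_self, norm_zero] at hxz
    linarith
  set m := ‖u‖ with hm
  have hm0 : 0 < m := norm_pos_iff.mpr hu0
  set y := m⁻¹ • u with hy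
  have hyn : ‖y‖ = 1 := by
    rw [hy, norm_smul, Real.norm_eq_abs, abs_of_pos (by positivity), ← hm]
    field_simp
  have hpy : p y = 0 := by rw [hy, map_smul, hpu]; simp
  have ho : ∀ t : ℝ, ‖x‖ ≤ ‖x + t • y‖ := ortho_of_functional hx hp hpx hpy
  have hm2ε : m ≤ 2 * ε := by linarith
  refine ⟨y, hyn, ho, ?_, ?_⟩
  · -- lam x y (ε/2) ≤ r
    rcases le_or_gt (ε/2) m with hcase | hcase
    · set θ := ε / (2 * m) with hθ
      have hθ0 : 0 < θ := by positivity
      have hθ1 : θ ≤ 1 := by rw [hθ, div_le_one (by positivity)]; linarith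
      have key : x + (ε/2) • y - (θ * r) • x = (1 - θ) • x + θ • z := by
        rw [hy, hu, hθ]
        match_scalars <;> field_simp <;> ring
      have hle : ‖x + (ε/2) • y - (θ * r) • x‖ ≤ 1 := by
        rw [key]
        calc ‖(1-θ) • x + θ • z‖ ≤ ‖(1-θ) • x‖ + ‖θ • z‖ := norm_add_le _ _
          _ = (1-θ) + θ := by
              rw [norm_smul, norm_smul, hx, hz, Real.norm_eq_abs, Real.norm_eq_abs,
                abs_of_nonneg (by linarith), abs_of_pos hθ0]; ring
          _ = 1 := by ring
      have := lam_le_of_le hx hyn ho (by positivity) hle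
      calc lam x y (ε/2) ≤ θ * r := this
        _ ≤ r := by nlinarith
    · have : ε / 2 < r := by linarith
      have := lam_le hx hyn ho (by positivity : (0:ℝ) ≤ ε/2) (by linarith)
      linarith
  · -- r ≤ lam x y (2 * ε)
    obtain ⟨q, hq, hqz⟩ := exists_dual_vector ℝ z (by intro h; rw [h] at hz; norm_num at hz)
    rw [hz] at hqz
    norm_cast at hqz
    set r2 := 1 - q x with hr2
    have hqx : q x = 1 - r2 := by rw [hr2]; ring
    have hr20 : 0 ≤ r2 := by
      have : |q x| ≤ ‖x‖ := by calc |q x| ≤ ‖q‖ * ‖x‖ := q.le_opNorm _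
                                  _ = ‖x‖ := by rw [hq, one_mul]
      rw [hx] at this; cases abs_le.mp this; rw [hr2]; linarith
    have hr2ε : r2 ≤ ε := by
      have : |q (z - x)| ≤ ‖q‖ * ‖z - x‖ := q.le_opNorm _
      rw [hq, one_mul, norm_sub_rev, hxz] at this
      have h2 : q (z - x) = r2 := by rw [map_sub, hqz, hqx]; ring
      rw [h2] at this; cases abs_le.mp this; linarith
    have hqu : q u = 1 - (1 - r) * (1 - r2) := by
      rw [hu, map_sub, map_smul, hqz, hqx, smul_eq_mul]
    have hA : 0 ≤ 1 - (1 - r) * (1 - r2) := by nlinarith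
    have hqy : q y = m⁻¹ * (1 - (1 - r) * (1 - r2)) := by rw [hy, map_smul, hqu]; simp
    apply le_lam hx hyn ho (by positivity : (0:ℝ) ≤ 2*ε) (by linarith)
    intro l hl
    have hql : q (x + (2*ε) • y - l • x) ≤ 1 := by
      have : |q (x + (2*ε) • y - l • x)| ≤ ‖q‖ * ‖x + (2*ε) • y - l • x‖ := q.le_opNorm _
      rw [hq, hl, one_mul] at this
      exact le_trans (le_abs_self _) this
    simp only [map_add, map_sub, map_smul, smul_eq_mul] at hql
    rw [hqy, hqx] at hql
    have hB : 0 ≤ m⁻¹ * (1 - (1 - r) * (1 - r2)) := mul_nonneg (inv_nonneg.mpr hm0.le) hA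
    have hA' : 1 - (1 - r) * (1 - r2) ≤ 2 * ε * (m⁻¹ * (1 - (1 - r) * (1 - r2))) := by
      have hmB : m * (m⁻¹ * (1 - (1 - r) * (1 - r2))) = 1 - (1 - r) * (1 - r2) := by
        field_simp
      have h2ε := mul_le_mul_of_nonneg_right hm2ε hB
      linarith
    set T := 2 * ε * (m⁻¹ * (1 - (1 - r) * (1 - r2))) with hT
    clear_value T r2 r m y u
    clear hl hqy hqu hqz hqx hpy hpu ho hyn hy hu hm hxz hpx hq hp hx hz
    have key : (1 - l) * (1 - r2) ≤ (1 - r) * (1 - r2) := by nlinarith [hql, hA']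
    have h12 : (0:ℝ) < 1 - r2 := by linarith
    have h3 : 0 ≤ (l - r) * (1 - r2) := by nlinarith [key]
    have h4 := (mul_nonneg_iff_of_pos_right h12).mp h3
    linarith
end Blocks

section Curve
variable {X : Type*} [NormedAddCommGroup X] [NormedSpace ℝ X]

lemma curve_ne {a b : X} (ha : ‖a‖ = 1) (hb : ‖b‖ = 1) (hne : b ≠ -a) {θ : ℝ}
    (h0 : 0 ≤ θ) (h1 : θ ≤ 1) : (1-θ) • a + θ • b ≠ 0 := by
  intro h
  have h2 : (1-θ) • a = -(θ • b) := by linear_combination (norm := module) h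
  have h3 := congrArg norm h2
  rw [norm_smul, norm_neg, norm_smul, ha, hb, Real.norm_eq_abs, Real.norm_eq_abs,
    abs_of_nonneg (by linarith), abs_of_nonneg h0] at h3
  simp only [mul_one] at h3
  have hθ : θ = 1/2 := by linarith
  rw [hθ] at h
  have hab : a + b = 0 := by linear_combination (norm := module) (2:ℝ) • h
  exact hne (eq_neg_of_add_eq_zero_right hab)

lemma exists_curve_point (x : X) {a b : X} (ha : ‖a‖ = 1) (hb : ‖b‖ = 1) (hne : b ≠ -a)
    {ε : ℝ} (hlo : ‖x - a‖ ≤ ε) (hhi : ε ≤ ‖x - b‖) :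
    ∃ θ : ℝ, 0 ≤ θ ∧ θ ≤ 1 ∧
      ‖x - (‖(1-θ) • a + θ • b‖)⁻¹ • ((1-θ) • a + θ • b)‖ = ε := by
  set v : ℝ → X := fun θ => (1-θ) • a + θ • b with hv
  have hvc : Continuous v := by fun_prop
  have hνc : Continuous fun θ => ‖v θ‖ := hvc.norm
  have hνne : ∀ θ ∈ Set.Icc (0:ℝ) 1, ‖v θ‖ ≠ 0 := by
    intro θ hθ
    exact norm_ne_zero_iff.mpr (curve_ne ha hb hne hθ.1 hθ.2)
  have hcont : ContinuousOn (fun θ => ‖x - (‖v θ‖)⁻¹ • v θ‖) (Set.Icc 0 1) := by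
    apply ContinuousOn.norm
    apply ContinuousOn.sub continuousOn_const
    exact ContinuousOn.smul (hνc.continuousOn.inv₀ hνne) hvc.continuousOn
  have hv0 : v 0 = a := by simp [hv]
  have hv1 : v 1 = b := by simp [hv]
  have hf0 : ‖x - (‖v 0‖)⁻¹ • v 0‖ = ‖x - a‖ := by rw [hv0, ha]; norm_num
  have hf1 : ‖x - (‖v 1‖)⁻¹ • v 1‖ = ‖x - b‖ := by rw [hv1, hb]; norm_num
  have hmem : ε ∈ Set.Icc (‖x - (‖v 0‖)⁻¹ • v 0‖) (‖x - (‖v 1‖)⁻¹ • v 1‖) := by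
    rw [hf0, hf1]; exact ⟨hlo, hhi⟩
  obtain ⟨θ, hθ, hθε⟩ := intermediate_value_Icc zero_le_one hcont hmem
  exact ⟨θ, hθ.1, hθ.2, hθε⟩

end Curve

section BlocksI_II
variable {X : Type*} [NormedAddCommGroup X] [NormedSpace ℝ X]

lemma phi_of_pair {ε : ℝ} (hε0 : 0 < ε) (hε1 : ε ≤ 1/2) {x y : X}
    (hx : ‖x‖ = 1) (hy : ‖y‖ = 1) (ho : ∀ t : ℝ, ‖x‖ ≤ ‖x + t • y‖) :
    ∃ (z : X) (p : X →L[ℝ] ℝ), ‖z‖ = 1 ∧ ‖x - z‖ = ε ∧ ‖p‖ = 1 ∧ p x = 1 ∧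
      p (x - z) ≤ lam x y (2*ε) := by
  obtain ⟨p, hp, hpx, hpy⟩ := exists_support_functional hx ho
  set L := lam x y (2*ε) with hL
  have hδ0 : (0:ℝ) ≤ 2*ε := by linarith
  have hδ1 : 2*ε ≤ 1 := by linarith
  have hL0 : 0 ≤ L := lam_nonneg hx ho _
  have hLle : L ≤ 2*ε := lam_le hx hy ho hδ0 hδ1
  have hmem : ‖x + (2*ε) • y - L • x‖ = 1 := lam_mem hx hy ho hδ0 hδ1
  set z1 := x + (2*ε) • y - L • x with hz1def
  have hz1 : ‖z1‖ = 1 := hmem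
  have hz1x : z1 ≠ -x := by
    intro h
    have h2 : y = ((2*ε)⁻¹ * (L - 2)) • x := by
      have h3 : (2*ε) • y = (L - 2) • x := by
        rw [hz1def] at h; linear_combination (norm := module) h
      rw [← smul_smul, ← h3, smul_smul,
        inv_mul_cancel₀ (by positivity : (2*ε:ℝ) ≠ 0), one_smul]
    exact not_parallel hx hy ho _ h2
  have hd1 : ‖x - z1‖ = ‖L • x - (2*ε) • y‖ := by
    congr 1; rw [hz1def]; module
  have hdist : ε ≤ ‖x - z1‖ := by
    rw [hd1]
    rcases le_or_gt ε L with hc | hc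
    · have : p (L • x - (2*ε) • y) = L := by
        rw [map_sub, map_smul, map_smul, hpx, hpy]; simp
      have h2 : |p (L • x - (2*ε) • y)| ≤ ‖L • x - (2*ε) • y‖ := by
        calc |p _| ≤ ‖p‖ * ‖L • x - (2*ε) • y‖ := p.le_opNorm _
          _ = _ := by rw [hp, one_mul]
      rw [this] at h2
      calc ε ≤ L := hc
        _ ≤ |L| := le_abs_self _
        _ ≤ _ := h2
    · have := norm_sub_norm_le ((2*ε) • y) (L • x)
      rw [norm_smul, norm_smul, hx, hy, Real.norm_eq_abs, Real.norm_eq_abs,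
        abs_of_nonneg hδ0, abs_of_nonneg hL0, norm_sub_rev] at this
      simp only [mul_one] at this
      linarith
  obtain ⟨θ, hθ0, hθ1, hθε⟩ := exists_curve_point x hx hz1 hz1x (by simp [hε0.le]) hdist
  set v := (1-θ) • x + θ • z1 with hvdef
  set ν := ‖v‖ with hν
  have hν0 : 0 < ν := norm_pos_iff.mpr (curve_ne hx hz1 hz1x hθ0 hθ1)
  have hν1 : ν ≤ 1 := by
    rw [hν, hvdef]
    calc ‖(1-θ) • x + θ • z1‖ ≤ ‖(1-θ) • x‖ + ‖θ • z1‖ := norm_add_le _ _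
      _ = (1-θ) + θ := by
          rw [norm_smul, norm_smul, hx, hz1, Real.norm_eq_abs, Real.norm_eq_abs,
            abs_of_nonneg (by linarith), abs_of_nonneg hθ0]; ring
      _ = 1 := by ring
  set z := ν⁻¹ • v with hzdef
  have hzn : ‖z‖ = 1 := by
    rw [hzdef, norm_smul, Real.norm_eq_abs, abs_of_pos (by positivity), ← hν]
    field_simp
  have hpv : p v = 1 - θ * L := by
    rw [hvdef, map_add, map_smul, map_smul, hz1def, map_sub, map_add, map_smul, map_smul,
      hpx, hpy]
    simp; ring
  have hc0 : 0 ≤ 1 - θ * L := by nlinarith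
  have hpz : 1 - θ * L ≤ p z := by
    rw [hzdef, map_smul, smul_eq_mul, hpv]
    rw [← div_eq_inv_mul, le_div_iff₀ hν0]
    nlinarith
  refine ⟨z, p, hzn, hθε, hp, hpx, ?_⟩
  rw [map_sub, hpx]
  nlinarith

lemma phi_of_pair' {ε : ℝ} (hε0 : 0 < ε) (hε1 : ε ≤ 1/2) {x y : X}
    (hx : ‖x‖ = 1) (hy : ‖y‖ = 1) (ho : ∀ t : ℝ, ‖x‖ ≤ ‖x + t • y‖) :
    ∃ (z : X) (p : X →L[ℝ] ℝ), ‖z‖ = 1 ∧ ‖x - z‖ = ε ∧ ‖p‖ = 1 ∧ p x = 1 ∧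
      lam x y (ε/2) ≤ p (x - z) := by
  obtain ⟨p, hp, hpx, hpy⟩ := exists_support_functional hx ho
  set L := lam x y (ε/2) with hL
  have hδ0 : (0:ℝ) ≤ ε/2 := by linarith
  have hδ1 : ε/2 ≤ 1 := by linarith
  have hL0 : 0 ≤ L := lam_nonneg hx ho _
  have hLle : L ≤ ε/2 := lam_le hx hy ho hδ0 hδ1
  have hmem : ‖x + (ε/2) • y - L • x‖ = 1 := lam_mem hx hy ho hδ0 hδ1
  set P1 := x + (ε/2) • y - L • x with hP1def
  have hP1 : ‖P1‖ = 1 := hmem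
  have hP1x : -x ≠ -P1 := by
    intro h
    have hP1x' : P1 = x := by
      have := congrArg Neg.neg h; simpa using this.symm
    have h2 : y = ((ε/2)⁻¹ * L) • x := by
      have h3 : (ε/2) • y = L • x := by
        rw [hP1def] at hP1x'; linear_combination (norm := module) hP1x'
      rw [← smul_smul, ← h3, smul_smul,
        inv_mul_cancel₀ (by positivity : (ε/2:ℝ) ≠ 0), one_smul]
    exact not_parallel hx hy ho _ h2
  have hnx : ‖-x‖ = 1 := by rw [norm_neg, hx]
  have hlo : ‖x - P1‖ ≤ ε := by
    have hd1 : ‖x - P1‖ = ‖L • x - (ε/2) • y‖ := by congr 1; rw [hP1def]; module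
    rw [hd1]
    calc ‖L • x - (ε/2) • y‖ ≤ ‖L • x‖ + ‖(ε/2) • y‖ := norm_sub_le _ _
      _ = L + ε/2 := by
          rw [norm_smul, norm_smul, hx, hy, Real.norm_eq_abs, Real.norm_eq_abs,
            abs_of_nonneg hL0, abs_of_nonneg hδ0]; ring
      _ ≤ ε := by linarith
  have hhi : ε ≤ ‖x - -x‖ := by
    have : x - -x = (2:ℝ) • x := by module
    rw [this, norm_smul, hx, Real.norm_eq_abs]; rw [abs_of_nonneg (by norm_num : (0:ℝ) ≤ 2)]
    linarith
  obtain ⟨θ, hθ0, hθ1, hθε⟩ := exists_curve_point x hP1 hnx hP1x hlo hhi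
  set v := (1-θ) • P1 + θ • (-x) with hvdef
  set ν := ‖v‖ with hν
  have hν0 : 0 < ν := norm_pos_iff.mpr (curve_ne hP1 hnx hP1x hθ0 hθ1)
  set z := ν⁻¹ • v with hzdef
  have hzn : ‖z‖ = 1 := by
    rw [hzdef, norm_smul, Real.norm_eq_abs, abs_of_pos (by positivity), ← hν]
    field_simp
  have hpv : p v = (1-θ) * (1 - L) - θ := by
    rw [hvdef, map_add, map_smul, map_smul, map_neg, hP1def, map_sub, map_add, map_smul,
      map_smul, hpx, hpy]
    simp; ring
  have hL1 : L < 1 := by linarith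
  have hpzle : p z ≤ 1 - L := by
    rcases le_or_gt (p v) 0 with hc | hc
    · have : p z ≤ 0 := by
        rw [hzdef, map_smul, smul_eq_mul]
        exact mul_nonpos_of_nonneg_of_nonpos (by positivity) hc
      linarith
    · have hs : θ < 1/2 := by
        by_contra hs; push_neg at hs
        rw [hpv] at hc
        nlinarith
      have hν2 : 1 - 2*θ ≤ ν := by
        have := norm_sub_norm_le ((1-θ) • P1) (-(θ • (-x)))
        have he : (1-θ) • P1 - -(θ • (-x)) = v := by rw [hvdef]; module
        rw [he, norm_neg, norm_smul, norm_smul, hP1, hnx, Real.norm_eq_abs, Real.norm_eq_abs,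
          abs_of_nonneg (by linarith), abs_of_nonneg hθ0] at this
        simp only [mul_one] at this
        linarith
      have hkey : p v ≤ (1 - L) * (1 - 2*θ) := by rw [hpv]; nlinarith
      rw [hzdef, map_smul, smul_eq_mul, ← div_eq_inv_mul, div_le_iff₀ hν0]
      calc p v ≤ (1 - L) * (1 - 2*θ) := hkey
        _ ≤ (1 - L) * ν := by
            apply mul_le_mul_of_nonneg_left hν2 (by linarith)
  refine ⟨z, p, hzn, hθε, hp, hpx, ?_⟩
  rw [map_sub, hpx]
  linarith
end BlocksI_II

noncomputable def lamMinus (X : Type*) [NormedAddCommGroup X] [NormedSpace ℝ X] (ε : ℝ) : ℝ :=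
  sInf {r : ℝ | ∃ x y : X, ‖x‖ = 1 ∧ ‖y‖ = 1 ∧ (∀ t : ℝ, ‖x‖ ≤ ‖x + t • y‖) ∧ r = lam x y ε}

noncomputable def lamPlus (X : Type*) [NormedAddCommGroup X] [NormedSpace ℝ X] (ε : ℝ) : ℝ :=
  sSup {r : ℝ | ∃ x y : X, ‖x‖ = 1 ∧ ‖y‖ = 1 ∧ (∀ t : ℝ, ‖x‖ ≤ ‖x + t • y‖) ∧ r = lam x y ε}

noncomputable def phiMinus (X : Type*) [NormedAddCommGroup X] [NormedSpace ℝ X] (ε : ℝ) : ℝ :=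
  sInf {r : ℝ | ∃ (x z : X) (p : X →L[ℝ] ℝ), ‖x‖ = 1 ∧ ‖z‖ = 1 ∧ ‖x - z‖ = ε ∧
    ‖p‖ = 1 ∧ p x = 1 ∧ r = p (x - z)}

noncomputable def phiPlus (X : Type*) [NormedAddCommGroup X] [NormedSpace ℝ X] (ε : ℝ) : ℝ :=
  sSup {r : ℝ | ∃ (x z : X) (p : X →L[ℝ] ℝ), ‖x‖ = 1 ∧ ‖z‖ = 1 ∧ ‖x - z‖ = ε ∧
    ‖p‖ = 1 ∧ p x = 1 ∧ r = p (x - z)}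

section Sets
variable (X : Type*) [NormedAddCommGroup X] [NormedSpace ℝ X]

def LamSet4 (δ : ℝ) : Set ℝ :=
  {r : ℝ | ∃ x y : X, ‖x‖ = 1 ∧ ‖y‖ = 1 ∧ (∀ t : ℝ, ‖x‖ ≤ ‖x + t • y‖) ∧ r = lam x y δ}

def PhiSet4 (ε : ℝ) : Set ℝ :=
  {r : ℝ | ∃ (x z : X) (p : X →L[ℝ] ℝ), ‖x‖ = 1 ∧ ‖z‖ = 1 ∧ ‖x - z‖ = ε ∧
    ‖p‖ = 1 ∧ p x = 1 ∧ r = p (x - z)}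

lemma lamMinus_eq (δ : ℝ) : lamMinus X δ = sInf (LamSet4 X δ) := rfl
lemma lamPlus_eq (δ : ℝ) : lamPlus X δ = sSup (LamSet4 X δ) := rfl
lemma phiMinus_eq (ε : ℝ) : phiMinus X ε = sInf (PhiSet4 X ε) := rfl
lemma phiPlus_eq (ε : ℝ) : phiPlus X ε = sSup (PhiSet4 X ε) := rfl

variable {X}

lemma LSet_nonneg {δ : ℝ} : ∀ r ∈ LamSet4 X δ, 0 ≤ r := by
  rintro r ⟨x, y, hx, hy, ho, rfl⟩
  exact lam_nonneg hx ho δ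

lemma LSet_le {δ : ℝ} (hδ0 : 0 ≤ δ) (hδ1 : δ ≤ 1) : ∀ r ∈ LamSet4 X δ, r ≤ δ := by
  rintro r ⟨x, y, hx, hy, ho, rfl⟩
  exact lam_le hx hy ho hδ0 hδ1

lemma PSet_nonneg {ε : ℝ} : ∀ r ∈ PhiSet4 X ε, 0 ≤ r := by
  rintro r ⟨x, z, p, hx, hz, hxz, hp, hpx, rfl⟩
  have h1 : |p z| ≤ ‖z‖ := by
    calc |p z| ≤ ‖p‖ * ‖z‖ := p.le_opNorm _
      _ = ‖z‖ := by rw [hp, one_mul]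
  rw [hz] at h1
  rw [map_sub, hpx]
  cases abs_le.mp h1
  linarith

lemma PSet_le {ε : ℝ} : ∀ r ∈ PhiSet4 X ε, r ≤ ε := by
  rintro r ⟨x, z, p, hx, hz, hxz, hp, hpx, rfl⟩
  have h1 : |p (x - z)| ≤ ‖p‖ * ‖x - z‖ := p.le_opNorm _
  rw [hp, hxz, one_mul] at h1
  exact le_trans (le_abs_self _) h1

lemma sInf_eq_zero_of_all_zero {s : Set ℝ} (h : ∀ r ∈ s, r = 0) : sInf s = 0 := by
  rcases s.eq_empty_or_nonempty with hs | hs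
  · rw [hs, Real.sInf_empty]
  · obtain ⟨r, hr⟩ := hs
    have h1 : sInf s ≤ 0 := (h r hr) ▸ csInf_le ⟨0, fun b hb => (h b hb).ge⟩ hr
    have h2 : 0 ≤ sInf s := le_csInf ⟨r, hr⟩ fun b hb => (h b hb).ge
    linarith

lemma sSup_eq_zero_of_all_zero {s : Set ℝ} (h : ∀ r ∈ s, r = 0) : sSup s = 0 := by
  rcases s.eq_empty_or_nonempty with hs | hs
  · rw [hs, Real.sSup_empty]
  · obtain ⟨r, hr⟩ := hs
    have h1 : 0 ≤ sSup s := (h r hr) ▸ le_csSup ⟨0, fun b hb => (h b hb).le⟩ hr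
    have h2 : sSup s ≤ 0 := csSup_le ⟨r, hr⟩ fun b hb => (h b hb).le
    linarith

end Sets

theorem stmt4 {X : Type*} [NormedAddCommGroup X] [NormedSpace ℝ X] [CompleteSpace X]
    (ε : ℝ) (hε : ε ∈ Set.Icc (0:ℝ) (1/2)) :
    lamMinus X (ε / 2) ≤ phiMinus X ε ∧ phiMinus X ε ≤ lamMinus X (2 * ε) ∧
    lamPlus X (ε / 2) ≤ phiPlus X ε ∧ phiPlus X ε ≤ lamPlus X (2 * ε) := by
  obtain ⟨hε0, hε1⟩ := hε
  rcases eq_or_lt_of_le hε0 with h0 | h0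
  · -- ε = 0
    have hε' : ε = 0 := h0.symm
    subst hε'
    have hL0 : ∀ r ∈ LamSet4 X 0, r = 0 := fun r hr =>
      le_antisymm (LSet_le le_rfl zero_le_one r hr) (LSet_nonneg r hr)
    have hP0 : ∀ r ∈ PhiSet4 X 0, r = 0 := by
      rintro r ⟨x, z, p, hx, hz, hxz, hp, hpx, rfl⟩
      have : x - z = 0 := norm_eq_zero.mp hxz
      rw [this, map_zero]
    have e1 : lamMinus X (0/2) = 0 := by
      rw [show (0:ℝ)/2 = 0 by norm_num, lamMinus_eq]; exact sInf_eq_zero_of_all_zero hL0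
    have e2 : lamMinus X (2*0) = 0 := by
      rw [show (2:ℝ)*0 = 0 by norm_num, lamMinus_eq]; exact sInf_eq_zero_of_all_zero hL0
    have e3 : lamPlus X (0/2) = 0 := by
      rw [show (0:ℝ)/2 = 0 by norm_num, lamPlus_eq]; exact sSup_eq_zero_of_all_zero hL0
    have e4 : lamPlus X (2*0) = 0 := by
      rw [show (2:ℝ)*0 = 0 by norm_num, lamPlus_eq]; exact sSup_eq_zero_of_all_zero hL0
    have e5 : phiMinus X 0 = 0 := by rw [phiMinus_eq]; exact sInf_eq_zero_of_all_zero hP0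
    have e6 : phiPlus X 0 = 0 := by rw [phiPlus_eq]; exact sSup_eq_zero_of_all_zero hP0
    rw [e1, e2, e3, e4, e5, e6]
    norm_num
  · -- 0 < ε
    have hd0 : (0:ℝ) ≤ ε/2 := by linarith
    have hd1 : ε/2 ≤ 1 := by linarith
    have hD0 : (0:ℝ) ≤ 2*ε := by linarith
    have hD1 : 2*ε ≤ 1 := by linarith
    refine ⟨?_, ?_, ?_, ?_⟩
    · -- lamMinus (ε/2) ≤ phiMinus ε
      rcases (PhiSet4 X ε).eq_empty_or_nonempty with hP | hP
      · rw [phiMinus_eq, hP, Real.sInf_empty, lamMinus_eq]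
        rcases (LamSet4 X (ε/2)).eq_empty_or_nonempty with hL | hL
        · rw [hL, Real.sInf_empty]
        · exfalso
          obtain ⟨r, x, y, hx, hy, ho, _⟩ := hL
          obtain ⟨z, p, hz, hxz, hp, hpx, _⟩ := phi_of_pair h0 hε1 hx hy ho
          exact Set.eq_empty_iff_forall_notMem.mp hP _ ⟨x, z, p, hx, hz, hxz, hp, hpx, rfl⟩
      · rw [phiMinus_eq]
        apply le_csInf hP
        rintro r ⟨x, z, p, hx, hz, hxz, hp, hpx, rfl⟩
        obtain ⟨y, hy, ho, h1, _⟩ := pair_of_phi h0 hε1 hx hz hxz hp hpx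
        calc lamMinus X (ε/2) ≤ lam x y (ε/2) :=
              csInf_le ⟨0, fun b hb => LSet_nonneg b hb⟩ ⟨x, y, hx, hy, ho, rfl⟩
          _ ≤ p (x - z) := h1
    · -- phiMinus ε ≤ lamMinus (2ε)
      rcases (LamSet4 X (2*ε)).eq_empty_or_nonempty with hL | hL
      · rw [lamMinus_eq, hL, Real.sInf_empty, phiMinus_eq]
        rcases (PhiSet4 X ε).eq_empty_or_nonempty with hP | hP
        · rw [hP, Real.sInf_empty]
        · exfalso
          obtain ⟨r, x, z, p, hx, hz, hxz, hp, hpx, _⟩ := hP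
          obtain ⟨y, hy, ho, _, _⟩ := pair_of_phi h0 hε1 hx hz hxz hp hpx
          exact Set.eq_empty_iff_forall_notMem.mp hL _ ⟨x, y, hx, hy, ho, rfl⟩
      · rw [lamMinus_eq]
        apply le_csInf hL
        rintro r ⟨x, y, hx, hy, ho, rfl⟩
        obtain ⟨z, p, hz, hxz, hp, hpx, hle⟩ := phi_of_pair h0 hε1 hx hy ho
        calc phiMinus X ε ≤ p (x - z) :=
              csInf_le ⟨0, fun b hb => PSet_nonneg b hb⟩ ⟨x, z, p, hx, hz, hxz, hp, hpx, rfl⟩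
          _ ≤ lam x y (2*ε) := hle
    · -- lamPlus (ε/2) ≤ phiPlus ε
      rcases (LamSet4 X (ε/2)).eq_empty_or_nonempty with hL | hL
      · rw [lamPlus_eq, hL, Real.sSup_empty, phiPlus_eq]
        rcases (PhiSet4 X ε).eq_empty_or_nonempty with hP | hP
        · rw [hP, Real.sSup_empty]
        · obtain ⟨r, hr⟩ := hP
          calc (0:ℝ) ≤ r := PSet_nonneg r hr
            _ ≤ sSup (PhiSet4 X ε) := le_csSup ⟨ε, fun b hb => PSet_le b hb⟩ hr
      · rw [lamPlus_eq, phiPlus_eq]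
        apply csSup_le hL
        rintro r ⟨x, y, hx, hy, ho, rfl⟩
        obtain ⟨z, p, hz, hxz, hp, hpx, hge⟩ := phi_of_pair' h0 hε1 hx hy ho
        calc lam x y (ε/2) ≤ p (x - z) := hge
          _ ≤ sSup (PhiSet4 X ε) :=
              le_csSup ⟨ε, fun b hb => PSet_le b hb⟩ ⟨x, z, p, hx, hz, hxz, hp, hpx, rfl⟩
    · -- phiPlus ε ≤ lamPlus (2ε)
      rcases (PhiSet4 X ε).eq_empty_or_nonempty with hP | hP
      · rw [phiPlus_eq, hP, Real.sSup_empty, lamPlus_eq]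
        rcases (LamSet4 X (2*ε)).eq_empty_or_nonempty with hL | hL
        · rw [hL, Real.sSup_empty]
        · obtain ⟨r, hr⟩ := hL
          calc (0:ℝ) ≤ r := LSet_nonneg r hr
            _ ≤ sSup (LamSet4 X (2*ε)) := le_csSup ⟨2*ε, fun b hb => LSet_le hD0 hD1 b hb⟩ hr
      · rw [phiPlus_eq, lamPlus_eq]
        apply csSup_le hP
        rintro r ⟨x, z, p, hx, hz, hxz, hp, hpx, rfl⟩
        obtain ⟨y, hy, ho, _, h2⟩ := pair_of_phi h0 hε1 hx hz hxz hp hpx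
        calc p (x - z) ≤ lam x y (2*ε) := h2
          _ ≤ sSup (LamSet4 X (2*ε)) :=
              le_csSup ⟨2*ε, fun b hb => LSet_le hD0 hD1 b hb⟩ ⟨x, y, hx, hy, ho, rfl⟩
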